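/- (Case 2 of the correctness of SHRINK.) Suppose s ∉ 𝒮(Δ), the shrinking set 𝒢 is nonempty and proper, v_i(s) = u for all i ∈ 𝒢, and v_i(s) > v_j(s) for all i ∈ 𝒢 and j ∉ 𝒢. Let p̂ ∉ 𝒢 attain the maximum of t_j over j ∉ 𝒢, and assume u²Δ_{p̂}² ≤ u²·‖s^{𝓘_{p̂}∖𝓘_𝒢}‖₂² + ‖s^{𝓘_{p̂}∩𝓘_𝒢}‖₂². Then t_* = t_{p̂} ≥ 1/u, and the output s_* satisfies v_i(s_*) = u·t_{p̂} for every i ∈ 𝒢 ∪ {p̂} and v_i(s_*) ≤ u·t_{p̂} for every i ∉ 𝒢 ∪ {p̂}. -/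

import Mathlib

/-- Coordinate projection: `(proj I x) j = x j` if `j ∈ I`, else `0`. -/
noncomputable def proj {n : ℕ} (I : Finset (Fin n)) (x : EuclideanSpace ℝ (Fin n)) :
    EuclideanSpace ℝ (Fin n) :=
  WithLp.toLp 2 (fun j => if j ∈ I then x j else 0)

lemma norm_sq_proj {n : ℕ} (I : Finset (Fin n)) (x : EuclideanSpace ℝ (Fin n)) :
    ‖proj I x‖ ^ 2 = ∑ j ∈ I, (x j) ^ 2 := by
  rw [EuclideanSpace.norm_eq, Real.sq_sqrt (by positivity)]
  have h : ∀ i, ‖proj I x i‖ ^ 2 = if i ∈ I then (x i) ^ 2 else 0 := by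
    intro i
    simp only [proj, PiLp.toLp_apply, Real.norm_eq_abs]
    split <;> simp [sq_abs]
  simp_rw [h]
  rw [Finset.sum_ite_mem, Finset.univ_inter]

lemma key_decomp {n : ℕ} (A B : Finset (Fin n)) (x : EuclideanSpace ℝ (Fin n)) (t : ℝ) :
    ‖proj A (x + (t - 1) • proj B x)‖ ^ 2
      = ‖proj (A \ B) x‖ ^ 2 + t ^ 2 * ‖proj (A ∩ B) x‖ ^ 2 := by
  rw [norm_sq_proj, norm_sq_proj, norm_sq_proj, Finset.mul_sum]
  have h1 : A.filter (· ∈ B) = A ∩ B := by ext j; simp [Finset.mem_filter, Finset.mem_inter]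
  have h2 : A.filter (fun j => ¬ j ∈ B) = A \ B := by
    ext j; simp [Finset.mem_filter, Finset.mem_sdiff]
  rw [← Finset.sum_filter_add_sum_filter_not A (· ∈ B), h1, h2, add_comm]
  congr 1
  · refine Finset.sum_congr rfl fun j hj => ?_
    have hjB : j ∉ B := (Finset.mem_sdiff.mp hj).2
    simp [proj, hjB, PiLp.add_apply, PiLp.smul_apply, smul_eq_mul]
  · refine Finset.sum_congr rfl fun j hj => ?_
    have hjB : j ∈ B := (Finset.mem_inter.mp hj).2
    simp only [proj, PiLp.toLp_apply, hjB, if_true, PiLp.add_apply, PiLp.smul_apply, smul_eq_mul]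
    ring

lemma pyth {n : ℕ} (A B : Finset (Fin n)) (x : EuclideanSpace ℝ (Fin n)) :
    ‖proj A x‖ ^ 2 = ‖proj (A \ B) x‖ ^ 2 + ‖proj (A ∩ B) x‖ ^ 2 := by
  have := key_decomp A B x 1
  simpa using this

lemma proj_empty {n : ℕ} (x : EuclideanSpace ℝ (Fin n)) : ‖proj (∅ : Finset (Fin n)) x‖ = 0 := by
  have : proj (∅ : Finset (Fin n)) x = 0 := by
    ext j; simp [proj]
  simp [this]

lemma sq_inj {x y : ℝ} (hx : 0 ≤ x) (hy : 0 ≤ y) (h : x ^ 2 = y ^ 2) : x = y := by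
  have h2 : |x| = |y| := by rw [← Real.sqrt_sq_eq_abs, ← Real.sqrt_sq_eq_abs, h]
  rwa [abs_of_nonneg hx, abs_of_nonneg hy] at h2

lemma sq_le_sq_iff' {x y : ℝ} (hy : 0 ≤ y) (h : x ^ 2 ≤ y ^ 2) : x ≤ y := by
  nlinarith


/-- Case 2 of the correctness of the SHRINK subroutine: if
`u²Δ_p̂² ≤ u²‖s^{I_p̂∖I_G}‖² + ‖s^{I_p̂∩I_G}‖²` for a maximizer `p̂ ∉ 𝒢` of the
elemental ratios, then `t_* = t_p̂ ≥ 1/u` and the output `s_*` satisfies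
`v_i(s_*) = u·t_p̂` on `𝒢 ∪ {p̂}` and `v_i(s_*) ≤ u·t_p̂` elsewhere. -/
theorem shrink_case_two {n q : ℕ} (I : Fin q → Finset (Fin n)) (Δ : Fin q → ℝ)
    (hΔ : ∀ i, 0 < Δ i) (s : EuclideanSpace ℝ (Fin n)) (u : ℝ)
    (𝒢 : Finset (Fin q)) (h𝒢ne : 𝒢.Nonempty) (h𝒢pr : 𝒢 ≠ Finset.univ)
    (hsout : ¬ (∀ i, ‖proj (I i) s‖ ≤ Δ i))
    (hvG : ∀ i ∈ 𝒢, ‖proj (I i) s‖ / Δ i = u)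
    (hvlt : ∀ i ∈ 𝒢, ∀ j ∉ 𝒢, ‖proj (I j) s‖ / Δ j < ‖proj (I i) s‖ / Δ i)
    (IG : Finset (Fin n)) (hIG : IG = 𝒢.biUnion I)
    (tf : Fin q → ℝ)
    (htf : ∀ i, tf i = if i ∈ 𝒢 then 1 / u
      else max (1 / u)
        (‖proj (I i \ IG) s‖ / Real.sqrt (u ^ 2 * Δ i ^ 2 - ‖proj (I i ∩ IG) s‖ ^ 2)))
    (phat : Fin q) (hphat : phat ∉ 𝒢)
    (hphatmax : ∀ j ∉ 𝒢, tf j ≤ tf phat)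
    (hcase : u ^ 2 * Δ phat ^ 2
      ≤ u ^ 2 * ‖proj (I phat \ IG) s‖ ^ 2 + ‖proj (I phat ∩ IG) s‖ ^ 2)
    (tstar : ℝ)
    (htstar : tstar = Finset.univ.sup' (Finset.univ_nonempty_iff.mpr ⟨phat⟩) tf)
    (sstar : EuclideanSpace ℝ (Fin n))
    (hsstar : sstar = s + (tstar - 1) • proj IG s) :
    tstar = tf phat ∧ 1 / u ≤ tf phat ∧
    (∀ i ∈ insert phat 𝒢, ‖proj (I i) sstar‖ / Δ i = u * tf phat) ∧
    (∀ i ∉ insert phat 𝒢, ‖proj (I i) sstar‖ / Δ i ≤ u * tf phat) := by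
  obtain ⟨g, hg⟩ := h𝒢ne
  -- u > 1
  have hu1 : 1 < u := by
    push_neg at hsout
    obtain ⟨i0, hi0⟩ := hsout
    have h0 : 1 < ‖proj (I i0) s‖ / Δ i0 := (one_lt_div (hΔ i0)).mpr hi0
    by_cases hmem : i0 ∈ 𝒢
    · rw [hvG i0 hmem] at h0; exact h0
    · have h1 := hvlt g hg i0 hmem
      rw [hvG g hg] at h1
      linarith
  have hu : 0 < u := by linarith
  have htpdef : tf phat = max (1 / u)
      (‖proj (I phat \ IG) s‖ /
        Real.sqrt (u ^ 2 * Δ phat ^ 2 - ‖proj (I phat ∩ IG) s‖ ^ 2)) := by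
    rw [htf phat, if_neg hphat]
  have htge : 1 / u ≤ tf phat := htpdef ▸ le_max_left _ _
  have htp : 0 < tf phat := lt_of_lt_of_le (by positivity) htge
  -- tstar = tf phat
  have h1 : tstar = tf phat := by
    rw [htstar]
    apply le_antisymm
    · apply Finset.sup'_le
      intro i _
      by_cases hi : i ∈ 𝒢
      · rw [htf i, if_pos hi]; exact htge
      · exact hphatmax i hi
    · exact Finset.le_sup' tf (Finset.mem_univ phat)
  -- strict bound for j ∉ 𝒢
  have hvlt' : ∀ j ∉ 𝒢, ‖proj (I j) s‖ < u * Δ j := by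
    intro j hj
    have h2 := hvlt g hg j hj
    rw [hvG g hg] at h2
    exact (div_lt_iff₀ (hΔ j)).mp h2
  -- D positivity for j ∉ 𝒢
  have hD : ∀ j ∉ 𝒢, ‖proj (I j \ IG) s‖ ^ 2 < u ^ 2 * Δ j ^ 2 - ‖proj (I j ∩ IG) s‖ ^ 2 := by
    intro j hj
    have hp := pyth (I j) IG s
    have h2 := hvlt' j hj
    have hΔj := hΔ j
    nlinarith [norm_nonneg (proj (I j) s)]
  -- facts about phat
  have hDp := hD phat hphat
  have hD0 : 0 < u ^ 2 * Δ phat ^ 2 - ‖proj (I phat ∩ IG) s‖ ^ 2 :=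
    lt_of_le_of_lt (sq_nonneg _) hDp
  have ha0 : 0 < ‖proj (I phat \ IG) s‖ := by
    rcases lt_or_eq_of_le (norm_nonneg (proj (I phat \ IG) s)) with h | h
    · exact h
    · exfalso; rw [← h] at hcase; norm_num at hcase; linarith
  have hsD : 0 < Real.sqrt (u ^ 2 * Δ phat ^ 2 - ‖proj (I phat ∩ IG) s‖ ^ 2) :=
    Real.sqrt_pos.mpr hD0
  have hsqD : (Real.sqrt (u ^ 2 * Δ phat ^ 2 - ‖proj (I phat ∩ IG) s‖ ^ 2)) ^ 2
      = u ^ 2 * Δ phat ^ 2 - ‖proj (I phat ∩ IG) s‖ ^ 2 := Real.sq_sqrt hD0.le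
  have hsle : Real.sqrt (u ^ 2 * Δ phat ^ 2 - ‖proj (I phat ∩ IG) s‖ ^ 2)
      ≤ u * ‖proj (I phat \ IG) s‖ := by
    have hDle : u ^ 2 * Δ phat ^ 2 - ‖proj (I phat ∩ IG) s‖ ^ 2
        ≤ (u * ‖proj (I phat \ IG) s‖) ^ 2 := by nlinarith
    calc Real.sqrt _ ≤ Real.sqrt ((u * ‖proj (I phat \ IG) s‖) ^ 2) :=
          Real.sqrt_le_sqrt hDle
      _ = u * ‖proj (I phat \ IG) s‖ := Real.sqrt_sq (by positivity)
  have htpe : tf phat = ‖proj (I phat \ IG) s‖ /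
      Real.sqrt (u ^ 2 * Δ phat ^ 2 - ‖proj (I phat ∩ IG) s‖ ^ 2) := by
    rw [htpdef]
    refine max_eq_right ?_
    rw [div_le_div_iff₀ hu hsD]
    calc 1 * Real.sqrt _ = Real.sqrt _ := one_mul _
      _ ≤ u * ‖proj (I phat \ IG) s‖ := hsle
      _ = ‖proj (I phat \ IG) s‖ * u := mul_comm _ _
  have htkey : (tf phat) ^ 2 * (u ^ 2 * Δ phat ^ 2 - ‖proj (I phat ∩ IG) s‖ ^ 2)
      = ‖proj (I phat \ IG) s‖ ^ 2 := by
    rw [htpe, div_pow, hsqD, div_mul_cancel₀ _ (ne_of_gt hD0)]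
  -- general norm identity
  have hnorm : ∀ i, ‖proj (I i) sstar‖ ^ 2
      = ‖proj (I i \ IG) s‖ ^ 2 + (tf phat) ^ 2 * ‖proj (I i ∩ IG) s‖ ^ 2 := by
    intro i
    rw [hsstar, h1]
    exact key_decomp (I i) IG s (tf phat)
  refine ⟨h1, htge, ?_, ?_⟩
  · -- equality on insert phat 𝒢
    intro i hi
    have hN : ‖proj (I i) sstar‖ ^ 2 = (u * tf phat * Δ i) ^ 2 := by
      rcases Finset.mem_insert.mp hi with h | h
      · subst h
        rw [hnorm i]
        linear_combination -htkey
      · have hsub : I i ⊆ IG := hIG ▸ Finset.subset_biUnion_of_mem I h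
        have hdiff : I i \ IG = ∅ := Finset.sdiff_eq_empty_iff_subset.mpr hsub
        have hint : I i ∩ IG = I i := Finset.inter_eq_left.mpr hsub
        have hnormi : ‖proj (I i) s‖ = u * Δ i :=
          (div_eq_iff (hΔ i).ne').mp (hvG i h)
        rw [hnorm i, hdiff, hint, proj_empty, hnormi]
        ring
    have heq : ‖proj (I i) sstar‖ = u * tf phat * Δ i :=
      sq_inj (norm_nonneg _) (mul_nonneg (mul_nonneg hu.le htp.le) (hΔ i).le) hN
    rw [div_eq_iff (hΔ i).ne']
    exact heq
  · -- inequality elsewhere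
    intro i hi
    have hiG : i ∉ 𝒢 := fun h => hi (Finset.mem_insert_of_mem h)
    have hDi := hD i hiG
    have hD0i : 0 < u ^ 2 * Δ i ^ 2 - ‖proj (I i ∩ IG) s‖ ^ 2 :=
      lt_of_le_of_lt (sq_nonneg _) hDi
    have hsDi : 0 < Real.sqrt (u ^ 2 * Δ i ^ 2 - ‖proj (I i ∩ IG) s‖ ^ 2) :=
      Real.sqrt_pos.mpr hD0i
    have hti : ‖proj (I i \ IG) s‖ /
        Real.sqrt (u ^ 2 * Δ i ^ 2 - ‖proj (I i ∩ IG) s‖ ^ 2) ≤ tf phat := by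
      have h2 : tf i ≤ tf phat := hphatmax i hiG
      rw [htf i, if_neg hiG] at h2
      exact le_trans (le_max_right _ _) h2
    have hai : ‖proj (I i \ IG) s‖
        ≤ tf phat * Real.sqrt (u ^ 2 * Δ i ^ 2 - ‖proj (I i ∩ IG) s‖ ^ 2) := by
      rw [div_le_iff₀ hsDi] at hti
      linarith [mul_comm (tf phat) (Real.sqrt (u ^ 2 * Δ i ^ 2 - ‖proj (I i ∩ IG) s‖ ^ 2))]
    have hsq : ‖proj (I i \ IG) s‖ ^ 2
        ≤ (tf phat) ^ 2 * (u ^ 2 * Δ i ^ 2 - ‖proj (I i ∩ IG) s‖ ^ 2) := by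
      rw [← Real.sq_sqrt hD0i.le, ← mul_pow]
      exact pow_le_pow_left₀ (norm_nonneg _) hai 2
    have hN2 : ‖proj (I i) sstar‖ ^ 2 ≤ (u * tf phat * Δ i) ^ 2 := by
      rw [hnorm i]; nlinarith
    have hle : ‖proj (I i) sstar‖ ≤ u * tf phat * Δ i :=
      sq_le_sq_iff' (mul_nonneg (mul_nonneg hu.le htp.le) (hΔ i).le) hN2
    rw [div_le_iff₀ (hΔ i)]
    exact hle
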